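/- Let f : [0, ∞) → [0, ∞) be continuous, τ ≥ 0, γρ > 0, C ≥ 0, a ≥ 0, and suppose f(t) + γρ·min(t, τ) ≤ a + C∫₀^t f(s) ds for all t ≥ 0. Then f(t) + γρ∫₀^t e^{C(t-s)} 1_{[0,τ]}(s) ds ≤ a·e^{Ct} for all t ≥ 0. -/

import Mathlib

open Set intervalIntegral MeasureTheory Real

lemma indic_integral (τ t : ℝ) (hτ : 0 ≤ τ) (ht : 0 ≤ t) (g : ℝ → ℝ) :
    (∫ s in (0:ℝ)..t, g s * Set.indicator (Set.Icc (0:ℝ) τ) (fun _ => (1:ℝ)) s)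
      = ∫ s in (0:ℝ)..min t τ, g s := by
  have hcongr : ∀ s ∈ Set.uIcc (0:ℝ) t,
      g s * Set.indicator (Set.Icc (0:ℝ) τ) (fun _ => (1:ℝ)) s
        = Set.indicator {x | x ≤ min t τ} g s := by
    intro s hs
    rw [Set.uIcc_of_le ht] at hs
    by_cases h : s ≤ τ
    · rw [Set.indicator_of_mem (Set.mem_Icc.mpr ⟨hs.1, h⟩),
        Set.indicator_of_mem (show s ∈ {x | x ≤ min t τ} from le_min hs.2 h), mul_one]
    · rw [Set.indicator_of_notMem (fun hmem => h (Set.mem_Icc.mp hmem).2),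
        Set.indicator_of_notMem (show s ∉ {x | x ≤ min t τ} from
          fun hmem => h (le_trans hmem (min_le_right _ _))), mul_zero]
  rw [intervalIntegral.integral_congr hcongr,
    intervalIntegral.integral_indicator ⟨le_min ht hτ, min_le_left _ _⟩]

lemma expDeriv (C x : ℝ) :
    HasDerivAt (fun t => Real.exp (-(C*t))) (-C * Real.exp (-(C*x))) x := by
  have h : HasDerivAt (fun t : ℝ => -(C*t)) (-C) x := by
    have := ((hasDerivAt_id x).const_mul C).neg; rw [mul_one] at this; exact this
  simpa [mul_comm] using h.exp

lemma expCont (C : ℝ) : Continuous (fun t => Real.exp (-(C*t))) := by fun_prop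

lemma expInt (C u : ℝ) (hC : 0 < C) :
    ∫ s in (0:ℝ)..u, Real.exp (-(C*s)) = (1 - Real.exp (-(C*u))) / C := by
  have h : ∀ x ∈ Set.uIcc (0:ℝ) u,
      HasDerivAt (fun t => -Real.exp (-(C*t))/C) (Real.exp (-(C*x))) x := by
    intro x _
    have h2 := (expDeriv C x).neg.div_const C
    refine h2.congr_deriv ?_
    field_simp
  rw [intervalIntegral.integral_eq_sub_of_hasDerivAt h ((expCont C).intervalIntegrable _ _)]
  field_simp
  rw [mul_zero, neg_zero, Real.exp_zero]; ring

lemma Ieq (C τ t : ℝ) (hC : 0 < C) (hτ : 0 ≤ τ) (ht : 0 ≤ t) :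
    (∫ s in (0:ℝ)..t,
        Real.exp (C*(t-s)) * Set.indicator (Set.Icc (0:ℝ) τ) (fun _ => (1:ℝ)) s)
      = Real.exp (C*t) * ((1 - Real.exp (-(C * min t τ)))/C) := by
  rw [indic_integral τ t hτ ht]
  have hcongr : ∀ s ∈ Set.uIcc (0:ℝ) (min t τ),
      Real.exp (C*(t-s)) = Real.exp (C*t) * Real.exp (-(C*s)) := by
    intro s _; rw [← Real.exp_add]; ring_nf
  rw [intervalIntegral.integral_congr hcongr, intervalIntegral.integral_const_mul,
    expInt C _ hC]

lemma Nderiv1 (a gr C : ℝ) (g F : ℝ → ℝ) (x : ℝ) (hF : HasDerivAt F (g x) x)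
    (hC : 0 < C) :
    HasDerivAt (fun t => a*(1 - Real.exp (-(C*t)))
        + gr*(t * Real.exp (-(C*t)) - (1 - Real.exp (-(C*t)))/C)
        - C*(Real.exp (-(C*t)) * F t))
      (C * Real.exp (-(C*x)) * (a - gr*x - g x + C * F x)) x := by
  have e := expDeriv C x
  have hh := ((((e.const_sub 1).const_mul a).add
      ((((hasDerivAt_id x).mul e).sub ((e.const_sub 1).div_const C)).const_mul gr)).sub
      ((e.mul hF).const_mul C))
  refine hh.congr_deriv ?_
  field_simp
  simp only [id]
  ring

lemma Nderiv2 (a gr C τ : ℝ) (g F : ℝ → ℝ) (x : ℝ) (hF : HasDerivAt F (g x) x) :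
    HasDerivAt (fun t => a*(1 - Real.exp (-(C*t)))
        + gr*(τ * Real.exp (-(C*t)) - (1 - Real.exp (-(C*τ)))/C)
        - C*(Real.exp (-(C*t)) * F t))
      (C * Real.exp (-(C*x)) * (a - gr*τ - g x + C * F x)) x := by
  have e := expDeriv C x
  have hh := ((((e.const_sub 1).const_mul a).add
      (((e.const_mul τ).sub_const ((1 - Real.exp (-(C*τ)))/C)).const_mul gr)).sub
      ((e.mul hF).const_mul C))
  refine hh.congr_deriv ?_
  ring

lemma gronwall_key (g : ℝ → ℝ) (hg : Continuous g)
    (τ : ℝ) (hτ : 0 ≤ τ) (gr : ℝ) (hgr : 0 < gr) (C : ℝ) (hC : 0 ≤ C) (a : ℝ)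
    (hyp : ∀ t, 0 ≤ t → g t + gr * min t τ ≤ a + C * ∫ s in (0:ℝ)..t, g s) :
    ∀ t, 0 ≤ t →
      g t + gr * ∫ s in (0:ℝ)..t,
          Real.exp (C * (t - s)) * Set.indicator (Set.Icc (0:ℝ) τ) (fun _ => (1:ℝ)) s
        ≤ a * Real.exp (C * t) := by
  intro t ht
  rcases eq_or_lt_of_le hC with hC0 | hCpos
  · -- C = 0 case
    have h1 := hyp t ht
    rw [← hC0] at h1 ⊢
    simp only [zero_mul, Real.exp_zero, one_mul, add_zero, mul_one] at h1 ⊢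
    have h2 := indic_integral τ t hτ ht (fun _ => (1:ℝ))
    simp only [one_mul] at h2
    have h3 : (∫ _ in (0:ℝ)..min t τ, (1:ℝ)) = min t τ := by simp
    rw [h2, h3]
    linarith
  · -- C > 0 case
    set F : ℝ → ℝ := fun u => ∫ s in (0:ℝ)..u, g s with hFdef
    have hF : ∀ x, HasDerivAt F (g x) x := fun x =>
      intervalIntegral.integral_hasDerivAt_right (hg.intervalIntegrable _ _)
        (hg.stronglyMeasurableAtFilter _ _) hg.continuousAt
    have hFcont : Continuous F := continuous_iff_continuousAt.mpr fun x => (hF x).continuousAt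
    set N : ℝ → ℝ := fun t => a*(1 - Real.exp (-(C*t)))
        + gr*(min t τ * Real.exp (-(C*t)) - (1 - Real.exp (-(C * min t τ)))/C)
        - C*(Real.exp (-(C*t)) * F t) with hNdef
    have hmin : Continuous fun t : ℝ => min t τ := continuous_id.min continuous_const
    have hNcont : Continuous N := by
      apply Continuous.sub
      · apply Continuous.add
        · exact continuous_const.mul (continuous_const.sub (expCont C))
        · exact continuous_const.mul ((hmin.mul (expCont C)).sub
            ((continuous_const.sub ((expCont C).comp hmin)).div_const C))
      · exact continuous_const.mul ((expCont C).mul hFcont)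
    have hDnonneg : ∀ x, 0 ≤ x →
        0 ≤ C * Real.exp (-(C*x)) * (a - gr * min x τ - g x + C * F x) := by
      intro x hx
      have := hyp x hx
      have hE : (0:ℝ) < Real.exp (-(C*x)) := Real.exp_pos _
      have h3 : 0 ≤ a - gr * min x τ - g x + C * F x := by
        simp only [hFdef]; linarith
      positivity
    have hmono1 : MonotoneOn N (Set.Icc 0 τ) := by
      apply monotoneOn_of_hasDerivWithinAt_nonneg (convex_Icc 0 τ) hNcont.continuousOn
        (f' := fun x => C * Real.exp (-(C*x)) * (a - gr * min x τ - g x + C * F x))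
      · intro x hx
        rw [interior_Icc] at hx
        have hev : (fun t => a*(1 - Real.exp (-(C*t)))
            + gr*(t * Real.exp (-(C*t)) - (1 - Real.exp (-(C*t)))/C)
            - C*(Real.exp (-(C*t)) * F t)) =ᶠ[nhds x] N := by
          filter_upwards [Iio_mem_nhds hx.2] with y hy
          simp only [hNdef, min_eq_left (le_of_lt (Set.mem_Iio.mp hy))]
        have hd := (Nderiv1 a gr C g F x (hF x) hCpos).congr_of_eventuallyEq hev.symm
        rw [min_eq_left hx.2.le]
        exact hd.hasDerivWithinAt
      · intro x hx
        rw [interior_Icc] at hx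
        exact hDnonneg x hx.1.le
    have hmono2 : MonotoneOn N (Set.Ici τ) := by
      apply monotoneOn_of_hasDerivWithinAt_nonneg (convex_Ici τ) hNcont.continuousOn
        (f' := fun x => C * Real.exp (-(C*x)) * (a - gr * min x τ - g x + C * F x))
      · intro x hx
        rw [interior_Ici] at hx
        have hev : (fun t => a*(1 - Real.exp (-(C*t)))
            + gr*(τ * Real.exp (-(C*t)) - (1 - Real.exp (-(C*τ)))/C)
            - C*(Real.exp (-(C*t)) * F t)) =ᶠ[nhds x] N := by
          filter_upwards [Ioi_mem_nhds hx] with y hy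
          simp only [hNdef, min_eq_right (le_of_lt (Set.mem_Ioi.mp hy))]
        have hd := (Nderiv2 a gr C τ g F x (hF x)).congr_of_eventuallyEq hev.symm
        rw [min_eq_right hx.le]
        exact hd.hasDerivWithinAt
      · intro x hx
        rw [interior_Ici] at hx
        exact hDnonneg x (hτ.trans hx.le)
    have hN0 : N 0 = 0 := by
      simp [hNdef, min_eq_left hτ, hFdef]
    have hNt : 0 ≤ N t := by
      rcases le_total t τ with h | h
      · rw [← hN0]
        exact hmono1 ⟨le_refl 0, hτ⟩ ⟨ht, h⟩ ht
      · have h1 : N τ ≤ N t := hmono2 (le_refl τ) h h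
        have h2 : N 0 ≤ N τ := hmono1 ⟨le_refl 0, hτ⟩ ⟨hτ, le_refl τ⟩ hτ
        linarith [hN0 ▸ h2]
    -- final assembly
    rw [Ieq C τ t hCpos hτ ht]
    have hyp' := hyp t ht
    have hprod : Real.exp (C*t) * Real.exp (-(C*t)) = 1 := by
      rw [← Real.exp_add]; simp
    have hNt' : 0 ≤ a*(1 - Real.exp (-(C*t)))
        + gr*(min t τ * Real.exp (-(C*t)) - (1 - Real.exp (-(C * min t τ)))/C)
        - C*(Real.exp (-(C*t)) * F t) := hNt
    have hkey := mul_le_mul_of_nonneg_left hNt' (Real.exp_pos (C*t)).le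
    rw [mul_zero] at hkey
    have hFt : (∫ s in (0:ℝ)..t, g s) = F t := rfl
    rw [hFt] at hyp'
    have expand : Real.exp (C*t) * (a*(1 - Real.exp (-(C*t)))
        + gr*(min t τ * Real.exp (-(C*t)) - (1 - Real.exp (-(C * min t τ)))/C)
        - C*(Real.exp (-(C*t)) * F t))
      = a*Real.exp (C*t) - a + gr*min t τ
        - gr*(Real.exp (C*t) * ((1 - Real.exp (-(C * min t τ)))/C)) - C*F t := by
      linear_combination (gr * min t τ - a - C * F t) * hprod
    rw [expand] at hkey
    linarith

/-- Deterministic Gronwall-type comparison lemma used in the extinction proof. -/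
theorem gronwall_comparison_extinction
    (f : ℝ → ℝ) (hf : ContinuousOn f (Set.Ici 0))
    (hfnn : ∀ t, 0 ≤ t → 0 ≤ f t)
    (τ : ℝ) (hτ : 0 ≤ τ)
    (gr : ℝ) (hgr : 0 < gr)
    (C : ℝ) (hC : 0 ≤ C)
    (a : ℝ) (ha : 0 ≤ a)
    (hyp : ∀ t, 0 ≤ t → f t + gr * min t τ ≤ a + C * ∫ s in (0:ℝ)..t, f s) :
    ∀ t, 0 ≤ t →
      f t + gr * ∫ s in (0:ℝ)..t,
          Real.exp (C * (t - s)) * Set.indicator (Set.Icc (0:ℝ) τ) (fun _ => (1:ℝ)) s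
        ≤ a * Real.exp (C * t) := by
  set g : ℝ → ℝ := fun t => f (max t 0) with hgdef
  have hg : Continuous g :=
    hf.comp_continuous (continuous_id.max continuous_const) fun x => Set.mem_Ici.mpr (le_max_right _ _)
  have heq : ∀ t, 0 ≤ t → g t = f t := by
    intro t ht; simp [hgdef, max_eq_left ht]
  have hint : ∀ t, 0 ≤ t → (∫ s in (0:ℝ)..t, g s) = ∫ s in (0:ℝ)..t, f s := by
    intro t ht
    apply intervalIntegral.integral_congr
    intro s hs
    rw [Set.uIcc_of_le ht] at hs
    exact heq s hs.1
  have hyp' : ∀ t, 0 ≤ t → g t + gr * min t τ ≤ a + C * ∫ s in (0:ℝ)..t, g s := by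
    intro t ht
    rw [heq t ht, hint t ht]
    exact hyp t ht
  intro t ht
  have := gronwall_key g hg τ hτ gr hgr C hC a hyp' t ht
  rwa [heq t ht] at this
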